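/- For any α > 0 and λ ∈ [0,1], ∫_0^1 |t(λ - t^α)|·t dt = (3 - (α+3)λ + 2α·λ^{1+3/α}) / (3(α+3)). -/

import Mathlib

open intervalIntegral Set

theorem A2_value (α lam : ℝ) (hα : 0 < α) (hlam : lam ∈ Icc (0:ℝ) 1) :
    ∫ t in (0:ℝ)..1, |t * (lam - t ^ α)| * t =
      (3 - (α + 3) * lam + 2 * α * lam ^ (1 + 3 / α)) / (3 * (α + 3)) := by
  obtain ⟨hl0, hl1⟩ := hlam
  have hαne : α ≠ 0 := hα.ne'
  set c : ℝ := lam ^ (α⁻¹) with hc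
  have hc0 : 0 ≤ c := Real.rpow_nonneg hl0 _
  have hc1 : c ≤ 1 := Real.rpow_le_one hl0 hl1 (by positivity)
  have hcα : c ^ α = lam := Real.rpow_inv_rpow hl0 hαne
  have hcontf : Continuous (fun t : ℝ => |t * (lam - t ^ α)| * t) := by
    have h1 : Continuous (fun t : ℝ => t ^ α) := Real.continuous_rpow_const hα.le
    continuity
  have hα2 : (0:ℝ) < α + 2 := by linarith
  have hα3 : (0:ℝ) < α + 3 := by linarith
  -- key rpow identities
  have hpow : ∀ t : ℝ, 0 ≤ t → t ^ (α + 2) = t ^ α * t ^ (2:ℕ) := by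
    intro t ht
    rw [Real.rpow_add' ht hα2.ne']
    norm_num [Real.rpow_natCast]
  have hint1 : IntervalIntegrable (fun t : ℝ => |t * (lam - t ^ α)| * t)
      MeasureTheory.volume 0 c := hcontf.intervalIntegrable _ _
  have hint2 : IntervalIntegrable (fun t : ℝ => |t * (lam - t ^ α)| * t)
      MeasureTheory.volume c 1 := hcontf.intervalIntegrable _ _
  rw [← intervalIntegral.integral_add_adjacent_intervals hint1 hint2]
  have hI1 : ∫ t in (0:ℝ)..c, |t * (lam - t ^ α)| * t
      = lam * (c ^ 3 / 3) - c ^ (α + 3) / (α + 3) := by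
    rw [intervalIntegral.integral_congr (g := fun t : ℝ => lam * t ^ (2:ℕ) - t ^ (α + 2))]
    · rw [intervalIntegral.integral_sub
        ((intervalIntegrable_pow 2).const_mul lam)
        (intervalIntegral.intervalIntegrable_rpow (by left; linarith)),
        intervalIntegral.integral_const_mul, integral_pow,
        integral_rpow (by left; linarith)]
      rw [show α + 2 + 1 = α + 3 by ring,
        Real.zero_rpow (by positivity : (0:ℝ) < α + 3).ne']
      norm_num
    · intro t ht
      rw [uIcc_of_le hc0] at ht
      have ht0 : 0 ≤ t := ht.1
      have htα : t ^ α ≤ lam := by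
        rw [← hcα]; exact Real.rpow_le_rpow ht0 ht.2 hα.le
      have : 0 ≤ t * (lam - t ^ α) := mul_nonneg ht0 (by linarith)
      simp only [abs_of_nonneg this, hpow t ht0]
      ring
  have hI2 : ∫ t in c..(1:ℝ), |t * (lam - t ^ α)| * t
      = (1 - c ^ (α + 3)) / (α + 3) - lam * ((1 - c ^ 3) / 3) := by
    rw [intervalIntegral.integral_congr (g := fun t : ℝ => t ^ (α + 2) - lam * t ^ (2:ℕ))]
    · rw [intervalIntegral.integral_sub
        (intervalIntegral.intervalIntegrable_rpow (by left; linarith))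
        ((intervalIntegrable_pow 2).const_mul lam),
        intervalIntegral.integral_const_mul, integral_pow,
        integral_rpow (by left; linarith)]
      rw [show α + 2 + 1 = α + 3 by ring]
      norm_num
    · intro t ht
      rw [uIcc_of_le hc1] at ht
      have ht0 : 0 ≤ t := le_trans hc0 ht.1
      have htα : lam ≤ t ^ α := by
        rw [← hcα]; exact Real.rpow_le_rpow hc0 ht.1 hα.le
      have hneg : t * (lam - t ^ α) ≤ 0 :=
        mul_nonpos_of_nonneg_of_nonpos ht0 (by linarith)
      simp only [abs_of_nonpos hneg, hpow t ht0]
      ring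
  rw [hI1, hI2]
  have hA : c ^ (α + 3) = lam ^ (1 + 3 / α) := by
    rw [hc, ← Real.rpow_mul hl0]
    field_simp
  have hB : lam * c ^ 3 = lam ^ (1 + 3 / α) := by
    rw [hc, ← Real.rpow_natCast (lam ^ α⁻¹) 3, ← Real.rpow_mul hl0,
      Real.rpow_add' hl0 (show 1 + 3 / α ≠ 0 by positivity), Real.rpow_one]
    norm_num
    field_simp
    exact Or.inl trivial
  rw [hA]
  have hB' : lam * (c ^ 3 / 3) = lam ^ (1 + 3 / α) / 3 := by
    rw [← hB]; ring
  rw [hB']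
  have hc3 : lam * ((1 - c ^ 3) / 3) = (lam - lam ^ (1 + 3 / α)) / 3 := by
    rw [← hB]; ring
  rw [hc3]
  field_simp
  ring
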